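/- Let α > 0 and c ∈ ℝ, and define the peakon profile u(x,t) = c e^{-|x-ct|/α}. Then for every t ∈ ℝ and every x ≠ ct, ∂_t u(x,t) + u(x,t) ∂_x u(x,t) + ∂_x [ (1/(2α)) ∫_ℝ e^{-|x-y|/α} ( u(y,t)² + (α²/2) (∂_y u(y,t))² ) dy ] = 0, where ∂_y u(y,t) is defined for y ≠ ct (a set of full measure). That is, the single peakon is an exact traveling-wave solution, away from its peak, of the dispersionless Camassa-Holm equation in the nonlocal form u_t + u u_x = -∂_x K*(u² + (α²/2)u_x²) with K(x) = (1/(2α)) e^{-|x|/α}. -/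

import Mathlib

open MeasureTheory

/-- The peakon profile `u(x,t) = c e^{-|x - ct|/α}`. -/
noncomputable def peakon (α c x t : ℝ) : ℝ := c * Real.exp (-|x - c * t| / α)

open Real Set Filter Topology

lemma intervalIntegral_exp_mul (b y X : ℝ) (hb : b ≠ 0) :
    ∫ t in y..X, Real.exp (b * t) = (Real.exp (b * X) - Real.exp (b * y)) / b := by
  rw [intervalIntegral.integral_comp_mul_left (fun u => Real.exp u) hb,
    integral_exp, smul_eq_mul]
  field_simp

lemma integrableOn_exp_mul_Iic' (b X : ℝ) (hb : 0 < b) :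
    IntegrableOn (fun y : ℝ => Real.exp (b * y)) (Iic X) := by
  refine integrableOn_Iic_of_intervalIntegral_norm_bounded (Real.exp (b * X) / b) X
    (fun y => ?_) tendsto_id ?_
  · exact ((Real.continuous_exp.comp (continuous_const.mul continuous_id)).integrableOn_Ioc)
  · filter_upwards [eventually_le_atBot X] with y hy
    simp_rw [Real.norm_eq_abs, abs_of_nonneg (Real.exp_pos _).le, id_eq]
    rw [intervalIntegral_exp_mul b y X hb.ne']
    have := (Real.exp_pos (b * y)).le
    rw [div_le_div_iff₀ hb hb]
    nlinarith [Real.exp_pos (b * X)]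

lemma integrableOn_exp_neg_mul_Ioi (b X : ℝ) (hb : 0 < b) :
    IntegrableOn (fun y : ℝ => Real.exp (-(b * y))) (Ioi X) := by
  simpa [neg_mul] using exp_neg_integrableOn_Ioi X hb

lemma integral_exp_neg_mul_Ioi (b X : ℝ) (hb : 0 < b) :
    ∫ y in Ioi X, Real.exp (-(b * y)) = Real.exp (-(b * X)) / b := by
  have hd : ∀ y ∈ Ici X, HasDerivAt (fun u : ℝ => -Real.exp (-(b * u)) / b)
      (Real.exp (-(b * y))) y := by
    intro y _
    have h1 : HasDerivAt (fun u : ℝ => -(b * u)) (-b) y := by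
      simpa using ((hasDerivAt_id y).const_mul b).fun_neg
    have := (h1.exp).fun_neg.div_const b
    refine this.congr_deriv ?_
    field_simp
  have ht : Tendsto (fun u : ℝ => -Real.exp (-(b * u)) / b) atTop (𝓝 0) := by
    have h2 : Tendsto (fun u : ℝ => -(b * u)) atTop atBot := by
      exact (tendsto_neg_atTop_atBot).comp (Tendsto.const_mul_atTop hb tendsto_id)
    simpa using ((Real.tendsto_exp_atBot.comp h2).neg.div_const b)
  have := integral_Ioi_of_hasDerivAt_of_tendsto' hd (integrableOn_exp_neg_mul_Ioi b X hb) ht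
  rw [this]; ring

lemma integral_exp_mul_Iic' (b X : ℝ) (hb : 0 < b) :
    ∫ y in Iic X, Real.exp (b * y) = Real.exp (b * X) / b := by
  have h := integral_comp_neg_Ioi (-X) (fun y => Real.exp (b * y))
  rw [neg_neg] at h
  rw [← h]
  simp_rw [mul_neg]
  rw [integral_exp_neg_mul_Ioi b (-X) hb]
  simp

lemma J_integrable (b X : ℝ) (hb : 0 < b) :
    Integrable (fun y : ℝ => Real.exp (-(b * |X - y|) - 2 * b * |y|)) := by
  have hcont : Continuous (fun y : ℝ => Real.exp (-(b * |X - y|) - 2 * b * |y|)) := by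
    continuity
  rw [← integrableOn_univ, ← Set.Iic_union_Ioi (a := (0:ℝ))]
  refine IntegrableOn.union ?_ ?_
  · refine Integrable.mono' (integrableOn_exp_mul_Iic' (2*b) 0 (by positivity))
      hcont.aestronglyMeasurable.restrict ?_
    rw [ae_restrict_iff' measurableSet_Iic]
    filter_upwards with y hy
    rw [Real.norm_eq_abs, abs_of_nonneg (Real.exp_pos _).le]
    apply Real.exp_le_exp.mpr
    have hyy : |y| = -y := abs_of_nonpos hy
    nlinarith [abs_nonneg (X - y), hyy]
  · refine Integrable.mono' (integrableOn_exp_neg_mul_Ioi (2*b) 0 (by positivity))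
      hcont.aestronglyMeasurable.restrict ?_
    rw [ae_restrict_iff' measurableSet_Ioi]
    filter_upwards with y hy
    rw [Real.norm_eq_abs, abs_of_nonneg (Real.exp_pos _).le]
    apply Real.exp_le_exp.mpr
    have hyy : |y| = y := abs_of_nonneg (le_of_lt hy)
    nlinarith [abs_nonneg (X - y), hyy]

lemma J_eval_nonneg (b X : ℝ) (hb : 0 < b) (hX : 0 ≤ X) :
    ∫ y : ℝ, Real.exp (-(b * |X - y|) - 2 * b * |y|)
      = 4 / (3 * b) * Real.exp (-(b * X)) - 2 / (3 * b) * Real.exp (-(2 * b * X)) := by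
  have hint := J_integrable b X hb
  have h1 : ∫ y in Iic (0:ℝ), Real.exp (-(b * |X - y|) - 2 * b * |y|)
      = Real.exp (-(b * X)) / (3 * b) := by
    rw [setIntegral_congr_fun measurableSet_Iic
      (g := fun y => Real.exp (-(b * X)) * Real.exp ((3 * b) * y)) ?_]
    · rw [integral_const_mul, integral_exp_mul_Iic' (3 * b) 0 (by positivity)]
      simp only [mul_zero, Real.exp_zero]
      ring
    · intro y hy
      have hy' : y ≤ (0:ℝ) := hy
      dsimp only
      rw [← Real.exp_add]
      congr 1
      rw [abs_of_nonpos hy', abs_of_nonneg (by linarith : (0:ℝ) ≤ X - y)]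
      ring
  have h2 : ∫ y in Ioc (0:ℝ) X, Real.exp (-(b * |X - y|) - 2 * b * |y|)
      = (Real.exp (-(b * X)) - Real.exp (-(2 * b * X))) / b := by
    rw [setIntegral_congr_fun measurableSet_Ioc
      (g := fun y => Real.exp (-(b * X)) * Real.exp ((-b) * y)) ?_]
    · rw [← intervalIntegral.integral_of_le hX, intervalIntegral.integral_const_mul,
        intervalIntegral_exp_mul (-b) 0 X (by linarith)]
      have e2 : Real.exp (-(b * X)) * Real.exp (-(b * X)) = Real.exp (-(2 * b * X)) := by
        rw [← Real.exp_add]; ring_nf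
      rw [show -b * X = -(b * X) by ring, show -b * (0:ℝ) = 0 by ring, Real.exp_zero, ← e2]
      field_simp [hb.ne']
      ring
    · intro y hy
      dsimp only
      rw [← Real.exp_add]
      congr 1
      rw [abs_of_nonneg (by linarith [hy.2] : (0:ℝ) ≤ X - y), abs_of_nonneg (le_of_lt hy.1)]
      ring
  have h3 : ∫ y in Ioi X, Real.exp (-(b * |X - y|) - 2 * b * |y|)
      = Real.exp (-(2 * b * X)) / (3 * b) := by
    rw [setIntegral_congr_fun measurableSet_Ioi
      (g := fun y => Real.exp (b * X) * Real.exp (-((3 * b) * y))) ?_]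
    · rw [integral_const_mul, integral_exp_neg_mul_Ioi (3 * b) X (by positivity)]
      have e3 : Real.exp (b * X) * Real.exp (-(3 * b * X)) = Real.exp (-(2 * b * X)) := by
        rw [← Real.exp_add]; ring_nf
      rw [eq_div_iff (by positivity : (3:ℝ) * b ≠ 0), ← e3]
      field_simp
    · intro y hy
      have hy' : X < y := hy
      dsimp only
      rw [← Real.exp_add]
      congr 1
      rw [abs_of_nonpos (by linarith : X - y ≤ 0), abs_of_nonneg (by linarith : (0:ℝ) ≤ y)]
      ring
  have hsplit2 : ∫ y in Ioi (0:ℝ), Real.exp (-(b * |X - y|) - 2 * b * |y|)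
      = (∫ y in Ioc (0:ℝ) X, Real.exp (-(b * |X - y|) - 2 * b * |y|))
        + ∫ y in Ioi X, Real.exp (-(b * |X - y|) - 2 * b * |y|) := by
    rw [← Ioc_union_Ioi_eq_Ioi hX]
    exact setIntegral_union (Ioc_disjoint_Ioi le_rfl) measurableSet_Ioi
      hint.integrableOn hint.integrableOn
  rw [← intervalIntegral.integral_Iic_add_Ioi (b := (0:ℝ)) hint.integrableOn hint.integrableOn,
    hsplit2, h1, h2, h3]
  field_simp
  ring

lemma J_eval (b X : ℝ) (hb : 0 < b) :
    ∫ y : ℝ, Real.exp (-(b * |X - y|) - 2 * b * |y|)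
      = 4 / (3 * b) * Real.exp (-(b * |X|)) - 2 / (3 * b) * Real.exp (-(2 * b * |X|)) := by
  rcases le_or_gt 0 X with hX | hX
  · rw [abs_of_nonneg hX]; exact J_eval_nonneg b X hb hX
  · rw [abs_of_neg hX]
    rw [← J_eval_nonneg b (-X) hb (by linarith)]
    have : ∀ y : ℝ, Real.exp (-(b * |-X - y|) - 2 * b * |y|)
        = (fun y : ℝ => Real.exp (-(b * |X - y|) - 2 * b * |y|)) (-y) := by
      intro y
      simp only
      rw [show X - -y = -(-X - y) by ring, abs_neg, abs_neg]
    simp_rw [this]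
    exact (integral_neg_eq_self (fun y : ℝ => Real.exp (-(b * |X - y|) - 2 * b * |y|)) volume).symm

lemma peakon_deriv_right {α c t x : ℝ} (hα : 0 < α) (hx : c * t < x) :
    deriv (fun y => peakon α c y t) x = -(c / α) * Real.exp (-|x - c * t| / α) := by
  have hev : (fun y => peakon α c y t) =ᶠ[𝓝 x] fun y => c * Real.exp (-(y - c * t) / α) := by
    filter_upwards [isOpen_Ioi.eventually_mem hx] with y hy
    simp only [peakon]
    rw [abs_of_pos (sub_pos.mpr hy)]
  rw [hev.deriv_eq]
  have h1 : HasDerivAt (fun y : ℝ => -(y - c * t) / α) (-1 / α) x := by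
    simpa using (((hasDerivAt_id x).sub_const (c * t)).neg).div_const α
  rw [(h1.exp.const_mul c).deriv, abs_of_pos (sub_pos.mpr hx)]
  ring

lemma peakon_deriv_left {α c t x : ℝ} (hα : 0 < α) (hx : x < c * t) :
    deriv (fun y => peakon α c y t) x = (c / α) * Real.exp (-|x - c * t| / α) := by
  have hev : (fun y => peakon α c y t) =ᶠ[𝓝 x] fun y => c * Real.exp ((y - c * t) / α) := by
    filter_upwards [isOpen_Iio.eventually_mem hx] with y hy
    simp only [peakon]
    rw [abs_of_neg (sub_neg.mpr hy), neg_neg]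
  rw [hev.deriv_eq]
  have h1 : HasDerivAt (fun y : ℝ => (y - c * t) / α) (1 / α) x := by
    simpa using ((hasDerivAt_id x).sub_const (c * t)).div_const α
  rw [(h1.exp.const_mul c).deriv, abs_of_neg (sub_neg.mpr hx), neg_neg]
  ring

lemma integrand_eq {α c t : ℝ} (hα : 0 < α) (x' : ℝ) {y : ℝ} (hy : y ≠ c * t) :
    Real.exp (-|x' - y| / α) *
        ((peakon α c y t) ^ 2 + (α ^ 2 / 2) * (deriv (fun z => peakon α c z t) y) ^ 2)
      = (3 * c ^ 2 / 2) *
        Real.exp (-((1/α) * |(x' - c * t) - (y - c * t)|) - 2 * (1/α) * |y - c * t|) := by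
  have hd2 : (deriv (fun z => peakon α c z t) y) ^ 2
      = (c / α) ^ 2 * (Real.exp (-|y - c * t| / α)) ^ 2 := by
    rcases lt_or_gt_of_ne hy with h | h
    · rw [peakon_deriv_left hα h]; ring
    · rw [peakon_deriv_right hα h]; ring
  rw [hd2, show (x' - c * t) - (y - c * t) = x' - y by ring]
  have hexp : Real.exp (-((1/α) * |x' - y|) - 2 * (1/α) * |y - c * t|)
      = Real.exp (-|x' - y| / α) * Real.exp (-|y - c * t| / α) ^ 2 := by
    rw [sq, ← Real.exp_add, ← Real.exp_add]
    congr 1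
    field_simp
    ring
  rw [hexp]
  simp only [peakon]
  field_simp
  ring

/-- The single peakon is an exact traveling-wave solution, away from its peak, of the
dispersionless Camassa-Holm equation in the nonlocal form
`u_t + u u_x = -∂_x K * (u² + (α²/2) u_x²)` with `K(x) = (1/(2α)) e^{-|x|/α}`. -/
theorem peakon_solves_CH
    (α c : ℝ) (hα : 0 < α) :
    ∀ t x : ℝ, x ≠ c * t →
      deriv (fun τ => peakon α c x τ) t
        + peakon α c x t * deriv (fun y => peakon α c y t) x
        + deriv (fun x' => (1/(2*α)) * ∫ y : ℝ,
            Real.exp (-|x' - y|/α) *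
              ((peakon α c y t)^2 + (α^2/2) * (deriv (fun z => peakon α c z t) y)^2)) x
      = 0 := by
  intro t x hx
  have hb : 0 < 1/α := by positivity
  have hfun : (fun x' => (1/(2*α)) * ∫ y : ℝ,
            Real.exp (-|x' - y|/α) *
              ((peakon α c y t)^2 + (α^2/2) * (deriv (fun z => peakon α c z t) y)^2))
      = fun x' => c^2 * Real.exp (-((1/α) * |x' - c*t|))
          - c^2/2 * Real.exp (-(2 * (1/α) * |x' - c*t|)) := by
    funext x'
    have h0 : ∀ᵐ (y : ℝ), y ≠ c * t := by
      rw [ae_iff]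
      have : {y : ℝ | ¬ y ≠ c * t} = {c * t} := by ext y; simp
      rw [this]
      exact measure_singleton _
    have hae : (fun y : ℝ => Real.exp (-|x' - y|/α) *
          ((peakon α c y t)^2 + (α^2/2) * (deriv (fun z => peakon α c z t) y)^2))
        =ᵐ[volume] fun y => (3 * c ^ 2 / 2) *
          Real.exp (-((1/α) * |(x' - c * t) - (y - c * t)|) - 2 * (1/α) * |y - c * t|) := by
      filter_upwards [h0] with y hy using integrand_eq hα x' hy
    rw [integral_congr_ae hae, integral_const_mul]
    have hshift : (∫ y : ℝ,
          Real.exp (-((1/α) * |(x' - c * t) - (y - c * t)|) - 2 * (1/α) * |y - c * t|))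
        = ∫ y : ℝ, Real.exp (-((1/α) * |(x' - c * t) - y|) - 2 * (1/α) * |y|) :=
      integral_sub_right_eq_self
        (fun y => Real.exp (-((1/α) * |(x' - c * t) - y|) - 2 * (1/α) * |y|)) (c * t)
    rw [hshift, J_eval (1/α) (x' - c * t) hb]
    have hαne := hα.ne'
    field_simp
    ring
  rw [hfun]
  rcases lt_or_gt_of_ne hx with hlt | hgt
  · -- x < c t
    have ht : deriv (fun τ => peakon α c x τ) t
        = c * (Real.exp ((x - c * t) / α) * (-c / α)) := by
      have hev : (fun τ => peakon α c x τ) =ᶠ[𝓝 t] fun τ => c * Real.exp ((x - c * τ) / α) := by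
        have hopen : IsOpen {τ : ℝ | x < c * τ} := isOpen_lt continuous_const (by continuity)
        filter_upwards [hopen.eventually_mem hlt] with τ hτ
        simp only [peakon]
        rw [abs_of_neg (sub_neg.mpr hτ), neg_neg]
      rw [hev.deriv_eq]
      have h1 : HasDerivAt (fun τ : ℝ => (x - c * τ) / α) (-c / α) t := by
        simpa using (((hasDerivAt_id t).const_mul c).const_sub x).div_const α
      exact (h1.exp.const_mul c).deriv
    have hG : deriv (fun x' => c^2 * Real.exp (-((1/α) * |x' - c*t|))
          - c^2/2 * Real.exp (-(2 * (1/α) * |x' - c*t|))) x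
        = c^2 * (Real.exp (-((1/α) * (c * t - x))) * (1/α))
          - c^2/2 * (Real.exp (-(2 * (1/α) * (c * t - x))) * (2 * (1/α))) := by
      have hev : (fun x' => c^2 * Real.exp (-((1/α) * |x' - c*t|))
            - c^2/2 * Real.exp (-(2 * (1/α) * |x' - c*t|)))
          =ᶠ[𝓝 x] fun x' => c^2 * Real.exp (-((1/α) * (c * t - x')))
            - c^2/2 * Real.exp (-(2 * (1/α) * (c * t - x'))) := by
        filter_upwards [isOpen_Iio.eventually_mem hlt] with y hy
        rw [abs_of_neg (sub_neg.mpr hy), neg_sub]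
      rw [hev.deriv_eq]
      have h1 : HasDerivAt (fun x' : ℝ => -((1/α) * (c * t - x'))) (1/α) x := by
        simpa using (((hasDerivAt_id x).const_sub (c * t)).const_mul (1/α)).fun_neg
      have h2 : HasDerivAt (fun x' : ℝ => -(2 * (1/α) * (c * t - x'))) (2 * (1/α)) x := by
        simpa using (((hasDerivAt_id x).const_sub (c * t)).const_mul (2 * (1/α))).fun_neg
      exact ((h1.exp.const_mul (c^2)).sub (h2.exp.const_mul (c^2/2))).deriv
    rw [ht, hG, peakon_deriv_left hα hlt]
    simp only [peakon]
    rw [abs_of_neg (sub_neg.mpr hlt), neg_neg]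
    have e1 : Real.exp (-((1/α) * (c * t - x))) = Real.exp ((x - c * t) / α) := by
      congr 1; field_simp; ring
    have e2 : Real.exp (-(2 * (1/α) * (c * t - x)))
        = Real.exp ((x - c * t) / α) * Real.exp ((x - c * t) / α) := by
      rw [← Real.exp_add]; congr 1; field_simp; ring
    rw [e1, e2]
    ring
  · -- c t < x
    have ht : deriv (fun τ => peakon α c x τ) t
        = c * (Real.exp ((c * t - x) / α) * (c / α)) := by
      have hev : (fun τ => peakon α c x τ) =ᶠ[𝓝 t] fun τ => c * Real.exp ((c * τ - x) / α) := by
        have hopen : IsOpen {τ : ℝ | c * τ < x} := isOpen_lt (by continuity) continuous_const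
        filter_upwards [hopen.eventually_mem hgt] with τ hτ
        simp only [peakon]
        rw [abs_of_pos (sub_pos.mpr hτ)]
        congr 1; ring
      rw [hev.deriv_eq]
      have h1 : HasDerivAt (fun τ : ℝ => (c * τ - x) / α) (c / α) t := by
        simpa using (((hasDerivAt_id t).const_mul c).sub_const x).div_const α
      exact (h1.exp.const_mul c).deriv
    have hG : deriv (fun x' => c^2 * Real.exp (-((1/α) * |x' - c*t|))
          - c^2/2 * Real.exp (-(2 * (1/α) * |x' - c*t|))) x
        = c^2 * (Real.exp (-((1/α) * (x - c * t))) * (-(1/α)))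
          - c^2/2 * (Real.exp (-(2 * (1/α) * (x - c * t))) * (-(2 * (1/α)))) := by
      have hev : (fun x' => c^2 * Real.exp (-((1/α) * |x' - c*t|))
            - c^2/2 * Real.exp (-(2 * (1/α) * |x' - c*t|)))
          =ᶠ[𝓝 x] fun x' => c^2 * Real.exp (-((1/α) * (x' - c * t)))
            - c^2/2 * Real.exp (-(2 * (1/α) * (x' - c * t))) := by
        filter_upwards [isOpen_Ioi.eventually_mem hgt] with y hy
        rw [abs_of_pos (sub_pos.mpr hy)]
      rw [hev.deriv_eq]
      have h1 : HasDerivAt (fun x' : ℝ => -((1/α) * (x' - c * t))) (-(1/α)) x := by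
        simpa using (((hasDerivAt_id x).sub_const (c * t)).const_mul (1/α)).fun_neg
      have h2 : HasDerivAt (fun x' : ℝ => -(2 * (1/α) * (x' - c * t))) (-(2 * (1/α))) x := by
        simpa using (((hasDerivAt_id x).sub_const (c * t)).const_mul (2 * (1/α))).fun_neg
      exact ((h1.exp.const_mul (c^2)).sub (h2.exp.const_mul (c^2/2))).deriv
    rw [ht, hG, peakon_deriv_right hα hgt]
    simp only [peakon]
    rw [abs_of_pos (sub_pos.mpr hgt)]
    have e1 : Real.exp (-((1/α) * (x - c * t))) = Real.exp (-(x - c * t) / α) := by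
      congr 1; field_simp
    have e2 : Real.exp (-(2 * (1/α) * (x - c * t)))
        = Real.exp (-(x - c * t) / α) * Real.exp (-(x - c * t) / α) := by
      rw [← Real.exp_add]; congr 1; field_simp; ring
    have e3 : Real.exp ((c * t - x) / α) = Real.exp (-(x - c * t) / α) := by
      congr 1; ring
    rw [e1, e2, e3]
    ring
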